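/- arXiv:2410.00893 — 6 statements merged into one kernel-verified Lean document; each statement's English description precedes it below -/
import Mathlib

section
/- Let n, m be natural numbers and let T₁, T₁', T₂, T₂' be subsets of Fin n, each of cardinality m. Then there exists a permutation π of Fin n with π(T₁) = T₂ and π(T₁') = T₂' if and only if |T₁ \ T₁'| = |T₂ \ T₂'|. -/
open Finset

lemma fiber_filter_eq (n : ℕ) (A B : Finset (Fin n)) (b : Bool × Bool) :
    (Finset.univ.filter (fun x => ((decide (x ∈ A), decide (x ∈ B)) : Bool × Bool) = b))
      = (if b.1 then A else Aᶜ) ∩ (if b.2 then B else Bᶜ) := by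
  ext x
  cases b with
  | mk b1 b2 =>
    cases b1 <;> cases b2 <;> simp [Prod.ext_iff]

lemma exists_perm_aux (n : ℕ) (A B C D : Finset (Fin n))
    (hAC : A.card = C.card) (hBD : B.card = D.card)
    (hab : (A \ B).card = (C \ D).card) :
    ∃ π : Equiv.Perm (Fin n), A.image π = C ∧ B.image π = D := by
  classical
  set c₁ : Fin n → Bool × Bool := fun x => (decide (x ∈ A), decide (x ∈ B)) with hc₁
  set c₂ : Fin n → Bool × Bool := fun x => (decide (x ∈ C), decide (x ∈ D)) with hc₂
  have hinter : (A ∩ B).card = (C ∩ D).card := by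
    have h1 := Finset.card_inter_add_card_sdiff A B
    have h2 := Finset.card_inter_add_card_sdiff C D
    omega
  have hsd2 : (B \ A).card = (D \ C).card := by
    have h1 := Finset.card_inter_add_card_sdiff B A
    have h2 := Finset.card_inter_add_card_sdiff D C
    rw [Finset.inter_comm] at h1 h2
    omega
  have hout : ((A ∪ B)ᶜ : Finset (Fin n)).card = ((C ∪ D)ᶜ : Finset (Fin n)).card := by
    have h1 := Finset.card_add_card_compl (A ∪ B)
    have h2 := Finset.card_add_card_compl (C ∪ D)
    have h3 := Finset.card_union_add_card_inter A B
    have h4 := Finset.card_union_add_card_inter C D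
    omega
  have hfib : ∀ b : Bool × Bool,
      (Finset.univ.filter (fun x => c₁ x = b)).card
        = (Finset.univ.filter (fun x => c₂ x = b)).card := by
    rintro ⟨b1, b2⟩
    rw [hc₁, hc₂, fiber_filter_eq, fiber_filter_eq]
    cases b1 <;> cases b2 <;> simp only [if_true, if_false, Bool.false_eq_true]
    · simpa [Finset.compl_eq_univ_sdiff, ← Finset.sdiff_union_distrib,
        Finset.inter_comm] using hout
    · simpa [sdiff_eq, Finset.inter_comm] using hsd2
    · simpa [sdiff_eq] using hab
    · exact hinter
  have hcard : ∀ b : Bool × Bool,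
      Fintype.card {x // c₁ x = b} = Fintype.card {x // c₂ x = b} := by
    intro b
    rw [Fintype.card_subtype, Fintype.card_subtype]
    exact hfib b
  let e : ∀ b : Bool × Bool, {x // c₁ x = b} ≃ {x // c₂ x = b} :=
    fun b => Fintype.equivOfCardEq (hcard b)
  let π : Equiv.Perm (Fin n) :=
    (Equiv.sigmaFiberEquiv c₁).symm.trans
      ((Equiv.sigmaCongrRight e).trans (Equiv.sigmaFiberEquiv c₂))
  have hπ : ∀ x, c₂ (π x) = c₁ x := by
    intro x
    exact (e (c₁ x) ⟨x, rfl⟩).2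
  refine ⟨π, ?_, ?_⟩
  · apply Finset.eq_of_subset_of_card_le
    · intro y hy
      rw [Finset.mem_image] at hy
      obtain ⟨x, hx, rfl⟩ := hy
      have := hπ x
      have h1 : decide (π x ∈ C) = decide (x ∈ A) := congrArg Prod.fst this
      simpa [hx] using h1
    · rw [Finset.card_image_of_injective _ π.injective, hAC]
  · apply Finset.eq_of_subset_of_card_le
    · intro y hy
      rw [Finset.mem_image] at hy
      obtain ⟨x, hx, rfl⟩ := hy
      have := hπ x
      have h1 : decide (π x ∈ D) = decide (x ∈ B) := congrArg Prod.snd this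
      simpa [hx] using h1
    · rw [Finset.card_image_of_injective _ π.injective, hBD]

theorem orbit_classification_of_trajectory_pairs
    (n m : ℕ) (T₁ T₁' T₂ T₂' : Finset (Fin n))
    (h₁ : T₁.card = m) (h₁' : T₁'.card = m) (h₂ : T₂.card = m) (h₂' : T₂'.card = m) :
    (∃ π : Equiv.Perm (Fin n), T₁.image π = T₂ ∧ T₁'.image π = T₂') ↔
      (T₁ \ T₁').card = (T₂ \ T₂').card := by
  constructor
  · rintro ⟨π, rfl, rfl⟩
    rw [← Finset.image_sdiff _ _ π.injective,
      Finset.card_image_of_injective _ π.injective]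
  · intro h
    exact exists_perm_aux n T₁ T₁' T₂ T₂' (by omega) (by omega) h
end

section
/- Fix natural numbers n, ν, μ with 1 ≤ μ and 2μ ≤ n, and for a natural number m and integer-valued index k define C(m, k) = Σ_{i=0}^{∞} binom(m, i) · binom(m, i + k) · binom(n − 2m, ν − 2i − k) (a finite sum, as all but finitely many terms vanish). Then for every k ≥ 0: μ · [(C(μ, k) − C(μ−1, k)) − (C(μ, k+2) − C(μ−1, k+2))] = k · C(μ, k) + (k+2) · C(μ, k+2) − 2(k+1) · C(μ, k+1), as an identity of integers. -/
open Polynomial Finset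

/-- `C n ν m k = ∑ᵢ binom(m, i) · binom(m, i + k) · binom(n − 2m, ν − 2i − k)`,
where terms with `2i + k > ν` vanish (the last binomial has negative lower index). -/
def chebCoeff (n ν m k : ℕ) : ℕ :=
  ∑ i ∈ Finset.range (ν + 1),
    if 2 * i + k ≤ ν then
      Nat.choose m i * Nat.choose m (i + k) * Nat.choose (n - 2 * m) (ν - 2 * i - k)
    else 0

namespace ChebAux

noncomputable def W : ℤ[X] := X

noncomputable def Pm (n m : ℕ) : (ℤ[X])[X] :=
  (1 + C W * X)^m * C ((1+W)^(n-2*m)) * (X + C W)^m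

lemma expand1 (m : ℕ) (a : ℤ[X]) :
    ((1 : (ℤ[X])[X]) + C a * X)^m
      = ∑ p ∈ range (m+1), C (a^p * (m.choose p : ℤ[X])) * X^p := by
  rw [add_comm, add_pow]
  refine Finset.sum_congr rfl fun p hp => ?_
  rw [mul_pow, one_pow, mul_one, ← C_pow, C_mul, C_eq_natCast]
  ring

lemma expand2 (m : ℕ) (a : ℤ[X]) :
    ((X : (ℤ[X])[X]) + C a)^m
      = ∑ i ∈ range (m+1), C (a^i * (m.choose i : ℤ[X])) * X^(m-i) := by
  rw [add_pow, ← Finset.sum_range_reflect]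
  refine Finset.sum_congr rfl fun i hi => ?_
  have hi' : i ≤ m := by simpa [Nat.lt_succ_iff] using hi
  have h1 : m + 1 - 1 - i = m - i := by omega
  have h2 : m - (m - i) = i := by omega
  rw [h1, h2, Nat.choose_symm hi', ← C_pow, C_mul, C_eq_natCast]
  ring

lemma coeff_Pm (n m k : ℕ) :
    (Pm n m).coeff (k + m)
      = ∑ i ∈ range (m+1),
          (m.choose i * m.choose (i+k) : ℤ[X]) * (X^(2*i+k) * (1+X)^(n-2*m)) := by
  rw [Pm, expand1, expand2]
  have h : (∑ p ∈ range (m+1), C (W^p * (m.choose p : ℤ[X])) * X^p)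
        * C ((1+W)^(n-2*m))
        * (∑ i ∈ range (m+1), C (W^i * (m.choose i : ℤ[X])) * X^(m-i))
      = ∑ p ∈ range (m+1), ∑ i ∈ range (m+1),
          C (W^(p+i) * ((m.choose p : ℤ[X]) * m.choose i) * (1+W)^(n-2*m))
            * X^(p + (m-i)) := by
    rw [Finset.sum_mul, Finset.sum_mul]
    refine Finset.sum_congr rfl fun p hp => ?_
    rw [Finset.mul_sum]
    refine Finset.sum_congr rfl fun i hi => ?_
    simp only [pow_add, C_mul]
    ring
  rw [h, Finset.sum_comm, finset_sum_coeff]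
  refine Finset.sum_congr rfl fun i hi => ?_
  have hi' : i ≤ m := by simpa [Nat.lt_succ_iff] using hi
  rw [finset_sum_coeff]
  simp only [coeff_C_mul, coeff_X_pow]
  have hcond : ∀ p : ℕ, (k + m = p + (m - i)) ↔ p = k + i := fun p => by omega
  simp only [hcond, mul_ite, mul_one, mul_zero]
  rw [Finset.sum_ite_eq' (range (m+1))]
  by_cases h : k + i ∈ range (m+1)
  · rw [if_pos h]
    have h2 : k + i + i = 2*i + k := by ring
    simp only [W, ← pow_add, h2]
    ring
  · rw [if_neg h]
    have h0 : m.choose (i + k) = 0 := by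
      apply Nat.choose_eq_zero_of_lt
      simp [Nat.lt_succ_iff] at h
      omega
    simp [h0]

lemma extraction (n ν m k : ℕ) :
    ((Pm n m).coeff (k + m)).coeff ν = (chebCoeff n ν m k : ℤ) := by
  have key : ∀ i : ℕ,
      ((m.choose i * m.choose (i+k) : ℤ[X]) * (X^(2*i+k) * (1+X)^(n-2*m))).coeff ν
        = ((if 2 * i + k ≤ ν then
            m.choose i * m.choose (i + k) * (n - 2*m).choose (ν - 2*i - k) else 0 : ℕ) : ℤ) := by
    intro i
    push_cast
    rw [mul_comm (X^(2*i+k)) ((1+X)^(n-2*m)), ← mul_assoc, coeff_mul_X_pow']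
    by_cases h : 2*i + k ≤ ν
    · rw [if_pos h, if_pos h]
      have h2 : ν - (2*i+k) = ν - 2*i - k := by omega
      rw [h2, mul_assoc, coeff_natCast_mul, coeff_natCast_mul, coeff_one_add_X_pow]
      ring
    · rw [if_neg h, if_neg h]
  rw [coeff_Pm, finset_sum_coeff]
  simp only [key]
  rw [chebCoeff, Nat.cast_sum]
  rw [Finset.sum_subset (Finset.range_subset_range.2 (show m+1 ≤ m+ν+2 by omega)),
    ← Finset.sum_subset (Finset.range_subset_range.2 (show ν+1 ≤ m+ν+2 by omega))]
  · intro x hx hx'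
    have h : ¬ (2*x + k ≤ ν) := by simp [Nat.lt_succ_iff] at hx'; omega
    simp [h]
  · intro x hx hx'
    have h : m.choose x = 0 :=
      Nat.choose_eq_zero_of_lt (by simpa [Nat.lt_succ_iff, Nat.succ_le_iff] using hx')
    simp [h]

lemma key (m : ℕ) (w c : ℤ[X]) :
    ((m+1 : ℕ) : (ℤ[X])[X]) * ((X^2 - 1) *
        ((1 + C w * X)^(m+1) * C c * (X + C w)^(m+1)
          - X * ((1 + C w * X)^m * C (c * (1+w)^2) * (X + C w)^m)))
      = (X - 1)^2 * (X * derivative ((1 + C w * X)^(m+1) * C c * (X + C w)^(m+1))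
          - ((m+1 : ℕ) : (ℤ[X])[X]) * ((1 + C w * X)^(m+1) * C c * (X + C w)^(m+1))) := by
  have hd : derivative ((1 + C w * X)^(m+1) * C c * (X + C w)^(m+1))
      = ((m+1 : ℕ) : (ℤ[X])[X]) * ((1 + C w * X)^m * C c *
          (C w * (X + C w)^(m+1) + (1 + C w * X) * (X + C w)^m)) := by
    simp only [derivative_mul, derivative_pow, derivative_add, derivative_one,
      derivative_C_mul, derivative_X, derivative_C, Nat.add_sub_cancel, mul_one]
    simp only [C_add, C_1, C_eq_natCast]
    push_cast
    ring
  rw [hd]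
  simp only [C_mul, C_add, C_pow, C_1, pow_succ]
  push_cast
  ring

lemma cf1 (f : (ℤ[X])[X]) (j : ℕ) :
    ((X^2 - 1) * f).coeff (j+2) = f.coeff j - f.coeff (j+2) := by
  rw [sub_mul, one_mul, coeff_sub, coeff_X_pow_mul]

lemma cf2 (f : (ℤ[X])[X]) (j : ℕ) :
    ((X-1)^2 * f).coeff (j+2) = f.coeff j - 2*(f.coeff (j+1)) + f.coeff (j+2) := by
  have h : (X-1)^2 * f = X^2*f - (X*f + X*f) + f := by ring
  rw [h, coeff_add, coeff_sub, coeff_X_pow_mul, coeff_add,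
    show j+2 = (j+1)+1 from rfl, coeff_X_mul]
  ring

lemma cf3 (f : (ℤ[X])[X]) (t : ℕ) :
    (X * derivative f).coeff (t+1) = ((t+1 : ℕ) : ℤ[X]) * f.coeff (t+1) := by
  rw [coeff_X_mul, coeff_derivative]
  push_cast
  ring

end ChebAux

open ChebAux in
theorem chebCoeff_derivative_identity
    (n ν μ : ℕ) (hμ : 1 ≤ μ) (hn : 2 * μ ≤ n) (k : ℕ) :
    (μ : ℤ) * (((chebCoeff n ν μ k : ℤ) - chebCoeff n ν (μ - 1) k) -
        ((chebCoeff n ν μ (k + 2) : ℤ) - chebCoeff n ν (μ - 1) (k + 2))) =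
      (k : ℤ) * chebCoeff n ν μ k + ((k : ℤ) + 2) * chebCoeff n ν μ (k + 2) -
        2 * ((k : ℤ) + 1) * chebCoeff n ν μ (k + 1) := by
  obtain ⟨m, rfl⟩ : ∃ m, μ = m + 1 := ⟨μ - 1, by omega⟩
  simp only [Nat.add_sub_cancel]
  -- the polynomial identity, specialized
  have hc : C ((1+W)^(n-2*(m+1)) * (1+W)^2) = (C ((1+W)^(n-2*m)) : (ℤ[X])[X]) := by
    have h2 : n-2*(m+1)+2 = n-2*m := by omega
    rw [← pow_add, h2]
  have hkey := key m W ((1+W)^(n-2*(m+1)))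
  rw [hc] at hkey
  rw [show (1 + C W * X)^(m+1) * C ((1+W)^(n-2*(m+1))) * (X + C W)^(m+1) = Pm n (m+1) from rfl,
    show (1 + C W * X)^m * C ((1+W)^(n-2*m)) * (X + C W)^m = Pm n m from rfl] at hkey
  have E := congrArg (fun p : (ℤ[X])[X] => (p.coeff (k+m+1+2)).coeff ν) hkey
  rw [coeff_natCast_mul, cf1 _ (k+m+1), cf2 _ (k+m+1)] at E
  rw [coeff_sub, coeff_sub, coeff_sub, coeff_sub, coeff_sub] at E
  rw [show k+m+1+2 = (k+m+2)+1 from rfl] at E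
  rw [coeff_X_mul, coeff_X_mul, cf3 _ (k+m), cf3 _ (k+m+1), cf3 _ (k+m+2),
    coeff_natCast_mul, coeff_natCast_mul, coeff_natCast_mul] at E
  -- now extract the w-coefficient
  have e0 : ((Pm n (m+1)).coeff (k+m+1)).coeff ν = (chebCoeff n ν (m+1) k : ℤ) :=
    extraction n ν (m+1) k
  have e1 : ((Pm n (m+1)).coeff (k+m+1+1)).coeff ν = (chebCoeff n ν (m+1) (k+1) : ℤ) := by
    have h := extraction n ν (m+1) (k+1)
    rwa [show (k+1)+(m+1) = k+m+1+1 by omega] at h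
  have e2 : ((Pm n (m+1)).coeff ((k+m+2)+1)).coeff ν = (chebCoeff n ν (m+1) (k+2) : ℤ) := by
    have h := extraction n ν (m+1) (k+2)
    rwa [show (k+2)+(m+1) = (k+m+2)+1 by omega] at h
  have f0 : ((Pm n m).coeff (k+m)).coeff ν = (chebCoeff n ν m k : ℤ) :=
    extraction n ν m k
  have f2 : ((Pm n m).coeff (k+m+2)).coeff ν = (chebCoeff n ν m (k+2) : ℤ) := by
    have h := extraction n ν m (k+2)
    rwa [show (k+2)+m = k+m+2 by omega] at h
  simp only [two_mul, coeff_add, coeff_sub, coeff_natCast_mul] at E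
  rw [e0, e1, e2, f0, f2] at E
  push_cast at E ⊢
  linear_combination E
end

section
/- Let R be a commutative ring containing ℚ (or any field of characteristic zero), f, g ∈ R[X] polynomials, and μ a natural number. Suppose μ · (f − g) = (X − 1) · f'. Then for every natural number j, ((μ : ℤ) − j) · f⁽ʲ⁾ − μ · g⁽ʲ⁾ = (X − 1) · f⁽ʲ⁺¹⁾, where f⁽ʲ⁾ denotes the j-th iterated formal derivative. -/
open Polynomial in
theorem iterated_derivative_relation
    (R : Type*) [CommRing R] [Algebra ℚ R] (f g : R[X]) (μ : ℕ)
    (h : (μ : ℤ) • (f - g) = (X - 1) * derivative f) :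
    ∀ j : ℕ,
      ((μ : ℤ) - (j : ℤ)) • (derivative^[j] f) - (μ : ℤ) • (derivative^[j] g) =
        (X - 1) * derivative^[j + 1] f := by
  intro j
  induction j with
  | zero => simpa [smul_sub] using h
  | succ j ih =>
      have hd := congrArg derivative ih
      simp only [derivative_sub, derivative_smul, derivative_mul, derivative_sub,
        derivative_X, derivative_one, sub_zero, one_mul] at hd
      rw [show derivative (derivative^[j] f) = derivative^[j+1] f from
        (Function.iterate_succ_apply' derivative j f).symm,
        show derivative (derivative^[j] g) = derivative^[j+1] g from
        (Function.iterate_succ_apply' derivative j g).symm,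
        show derivative (derivative^[j+1] f) = derivative^[j+2] f from
        (Function.iterate_succ_apply' derivative (j+1) f).symm] at hd
      have : ((μ : ℤ) - (j+1 : ℕ)) • derivative^[j+1] f
          = ((μ : ℤ) - j) • derivative^[j+1] f - derivative^[j+1] f := by
        push_cast
        rw [sub_add_eq_sub_sub, sub_smul, one_smul]
      rw [this]
      linear_combination hd
end

section
/- Let K ≥ 1 be a natural number and θ ∈ [0, π] a real number. Then ((−1)^k · cos(k·θ) ≥ 0 for every natural number k ≤ K) if and only if θ ≥ (2K − 1)·π / (2K). -/
open Real

private lemma cos_flip (m : ℕ) (θ : ℝ) :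
    (-1 : ℝ) ^ m * Real.cos ((m : ℝ) * θ) = Real.cos ((m : ℝ) * π - (m : ℝ) * θ) := by
  have h := Real.cos_nat_mul_pi_sub ((m : ℝ) * π - (m : ℝ) * θ) m
  have heq : (m : ℝ) * π - ((m : ℝ) * π - (m : ℝ) * θ) = (m : ℝ) * θ := by ring
  rw [heq] at h
  rw [h, ← mul_assoc, ← pow_add, Even.neg_one_pow ⟨m, rfl⟩, one_mul]

theorem even_case_sign_criterion (K : ℕ) (hK : 1 ≤ K) (θ : ℝ)
    (h0 : 0 ≤ θ) (h1 : θ ≤ π) :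
    (∀ k : ℕ, k ≤ K → 0 ≤ (-1 : ℝ) ^ k * Real.cos (k * θ)) ↔
      (2 * (K : ℝ) - 1) * π / (2 * K) ≤ θ := by
  have hπ : 0 < π := Real.pi_pos
  have hKR : (1 : ℝ) ≤ (K : ℝ) := by exact_mod_cast hK
  constructor
  · intro h
    by_contra hlt
    push_neg at hlt
    have hltK : θ < ((2 : ℝ) * K - 1) * π / (2 * K) := hlt
    -- case θ < π/2 : k = 1 gives contradiction
    by_cases hhalf : θ < π / 2
    · have h1' := h 1 hK
      have hcos : 0 < Real.cos θ :=
        Real.cos_pos_of_mem_Ioo ⟨by linarith, hhalf⟩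
      simp only [pow_one, Nat.cast_one, one_mul] at h1'
      nlinarith
    push_neg at hhalf
    -- θ ≥ π/2, so K ≥ 2 (K = 1 contradicts hlt)
    have hK2 : 2 ≤ K := by
      by_contra hc
      push_neg at hc
      interval_cases K
      · have : ((2 : ℝ) * 1 - 1) * π / (2 * 1) = π / 2 := by ring
        rw [Nat.cast_one, this] at hltK
        linarith
    classical
    set P : ℕ → Prop := fun k => ((2 : ℝ) * k - 1) * π / (2 * k) ≤ θ with hP
    have hP1 : P 1 := by
      show ((2 : ℝ) * (1 : ℕ) - 1) * π / (2 * (1 : ℕ)) ≤ θ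
      push_cast
      calc ((2 : ℝ) * 1 - 1) * π / (2 * 1) = π / 2 := by ring
        _ ≤ θ := hhalf
    set k := Nat.findGreatest P (K - 1) with hk
    have h1K : 1 ≤ K - 1 := by omega
    have hk1 : 1 ≤ k := Nat.le_findGreatest h1K hP1
    have hkK : k ≤ K - 1 := Nat.findGreatest_le _
    have hPk : P k := Nat.findGreatest_spec h1K hP1
    have hkR : (1 : ℝ) ≤ (k : ℝ) := by exact_mod_cast hk1
    -- P (k+1) fails
    have hnPk1 : ¬ P (k + 1) := by
      rcases lt_or_ge (K - 1) (k + 1) with hcase | hcase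
      · have hkq : k + 1 = K := by omega
        rw [hkq]
        exact not_le.mpr hltK
      · exact Nat.findGreatest_is_greatest (Nat.lt_succ_self k) hcase
    set m := k + 1 with hm
    have hmK : m ≤ K := by omega
    have hmR : ((m : ℝ)) = (k : ℝ) + 1 := by push_cast [hm]; ring
    -- bounds on t := m π - m θ
    have hkpos : (0 : ℝ) < (k : ℝ) := by linarith
    have hmpos : (0 : ℝ) < (m : ℝ) := by rw [hmR]; linarith
    have hub : θ < ((2 : ℝ) * m - 1) * π / (2 * m) := by
      have := hnPk1
      simp only [hP, not_le] at this
      convert this using 3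
    have hlb : ((2 : ℝ) * k - 1) * π / (2 * k) ≤ θ := hPk
    have hlo : π / 2 < (m : ℝ) * π - (m : ℝ) * θ := by
      rw [lt_div_iff₀ (by positivity : (0:ℝ) < 2 * (m:ℝ))] at hub
      nlinarith
    have hhi : (m : ℝ) * π - (m : ℝ) * θ < π + π / 2 := by
      rw [div_le_iff₀ (by positivity : (0:ℝ) < 2 * (k:ℝ))] at hlb
      -- (2k-1)π ≤ 2kθ ; m = k+1 ; need mπ - mθ < 3π/2
      -- mπ - mθ ≤ (k+1)π - (k+1)(2k-1)π/(2k) = (k+1)π/(2k) ≤ π < 3π/2 for k ≥ 1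
      rw [hmR]
      nlinarith
    have hneg : (-1 : ℝ) ^ m * Real.cos ((m : ℝ) * θ) < 0 := by
      rw [cos_flip]
      exact Real.cos_neg_of_pi_div_two_lt_of_lt hlo hhi
    have := h m hmK
    linarith
  · intro hθ k hkK
    rcases Nat.eq_zero_or_pos k with rfl | hk1
    · simp
    have hkR : (1 : ℝ) ≤ (k : ℝ) := by exact_mod_cast hk1
    have hkKR : (k : ℝ) ≤ (K : ℝ) := by exact_mod_cast hkK
    rw [cos_flip]
    apply Real.cos_nonneg_of_mem_Icc
    constructor
    · -- -(π/2) ≤ kπ - kθ : since θ ≤ π, kπ - kθ ≥ 0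
      have : (k : ℝ) * θ ≤ (k : ℝ) * π := by nlinarith
      nlinarith
    · -- kπ - kθ ≤ π/2 : θ ≥ (2K-1)π/(2K) ⇒ π - θ ≤ π/(2K) ⇒ k(π-θ) ≤ kπ/(2K) ≤ π/2
      have h2K : (0 : ℝ) < 2 * (K : ℝ) := by linarith
      rw [div_le_iff₀ h2K] at hθ
      -- (2K-1)π ≤ 2Kθ
      have hk' : (k : ℝ) * (π - θ) ≤ (k : ℝ) * (π / (2 * K)) := by
        apply mul_le_mul_of_nonneg_left _ (by linarith)
        rw [le_div_iff₀ h2K]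
        nlinarith
      have : (k : ℝ) * (π / (2 * K)) ≤ π / 2 := by
        have heq : (k : ℝ) * (π / (2 * K)) = (k : ℝ) * π / (2 * K) := by ring
        rw [heq, div_le_div_iff₀ (by positivity) (by norm_num : (0:ℝ) < 2)]
        nlinarith
      nlinarith
end

section
/- Let K ≥ 1 be a natural number and θ ∈ (0, π] a real number. Then ((−1)^k · sin((2k+1)·θ/2) ≥ 0 for every natural number k ≤ K) if and only if θ ≥ 2K·π / (2K + 1). -/
open Real

theorem odd_case_sign_criterion (K : ℕ) (hK : 1 ≤ K) (θ : ℝ)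
    (h0 : 0 < θ) (h1 : θ ≤ π) :
    (∀ k : ℕ, k ≤ K → 0 ≤ (-1 : ℝ) ^ k * Real.sin ((2 * k + 1) * θ / 2)) ↔
      2 * (K : ℝ) * π / (2 * K + 1) ≤ θ := by
  have hpi := Real.pi_pos
  constructor
  · intro h
    by_contra hlt
    push_neg at hlt
    have hKpos : (0:ℝ) < 2 * (K:ℝ) + 1 := by positivity
    have hθK : θ * (2 * (K:ℝ) + 1) < 2 * K * π := (lt_div_iff₀ hKpos).mp hlt
    classical
    set P : ℕ → Prop := fun k => θ * (2 * (k:ℝ) + 1) < 2 * k * π with hP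
    have hPK : P K := hθK
    have hex : ∃ k, P k := ⟨K, hPK⟩
    set k₀ := Nat.find hex with hk₀
    have hPk₀ : P k₀ := Nat.find_spec hex
    have hk₀K : k₀ ≤ K := Nat.find_min' hex hPK
    have hk₀pos : 1 ≤ k₀ := by
      rcases Nat.eq_zero_or_pos k₀ with h0' | h0'
      · exfalso
        have := hPk₀
        rw [h0'] at this
        simp only [hP, Nat.cast_zero] at this
        nlinarith
      · exact h0'
    obtain ⟨m, hm⟩ : ∃ m, k₀ = m + 1 := ⟨k₀ - 1, (Nat.succ_pred_eq_of_pos hk₀pos).symm⟩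
    have hnotPm : ¬ P m := Nat.find_min hex (by omega)
    have hmle : 2 * (m:ℝ) * π ≤ θ * (2 * m + 1) := le_of_not_gt hnotPm
    -- x = (2k₀+1)θ/2
    set x : ℝ := (2 * (k₀:ℝ) + 1) * θ / 2 with hx
    have hcast : (k₀:ℝ) = (m:ℝ) + 1 := by rw [hm]; push_cast; ring
    have hupper : x < ((m:ℝ) + 1) * π := by
      have := hPk₀
      simp only [hP] at this
      rw [hx, hcast] at *
      nlinarith
    have hlower : (m:ℝ) * π < x := by
      rw [hx, hcast]
      nlinarith
    have hsin : Real.sin x = (-1:ℝ)^m * Real.sin (x - m * π) := by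
      have := Real.sin_add_nat_mul_pi (x - m * π) m
      rw [sub_add_cancel] at this
      rw [this]
    have hsinpos : 0 < Real.sin (x - m * π) :=
      Real.sin_pos_of_pos_of_lt_pi (by linarith) (by linarith)
    have hneg : (-1:ℝ)^k₀ * Real.sin x < 0 := by
      rw [hsin, hm, pow_succ]
      have : (-1:ℝ)^m * -1 * ((-1:ℝ)^m * Real.sin (x - m*π))
          = -((-1:ℝ)^m * (-1:ℝ)^m * Real.sin (x - m*π)) := by ring
      rw [this, ← pow_add, ← two_mul, pow_mul]
      simp only [neg_one_sq, one_pow, one_mul]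
      linarith
    have := h k₀ hk₀K
    have hxeq : (2 * (k₀:ℝ) + 1) * θ / 2 = x := rfl
    rw [hxeq] at this
    linarith
  · intro hθ k hk
    have hkpos : (0:ℝ) < 2 * (k:ℝ) + 1 := by positivity
    have hKpos : (0:ℝ) < 2 * (K:ℝ) + 1 := by positivity
    have hkK : (k:ℝ) ≤ K := Nat.cast_le.mpr hk
    have hmono : 2 * (k:ℝ) * π / (2 * k + 1) ≤ 2 * (K:ℝ) * π / (2 * K + 1) := by
      rw [div_le_div_iff₀ hkpos hKpos]
      nlinarith
    have hθk : 2 * (k:ℝ) * π ≤ θ * (2 * k + 1) :=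
      (div_le_iff₀ hkpos).mp (le_trans hmono hθ)
    set x : ℝ := (2 * (k:ℝ) + 1) * θ / 2 with hx
    have hlow : (k:ℝ) * π ≤ x := by rw [hx]; nlinarith
    have hhigh : x ≤ (k:ℝ) * π + π := by rw [hx]; nlinarith
    have hsin : Real.sin x = (-1:ℝ)^k * Real.sin (x - k * π) := by
      have := Real.sin_add_nat_mul_pi (x - k * π) k
      rw [sub_add_cancel] at this
      rw [this]
    have hsinpos : 0 ≤ Real.sin (x - k * π) :=
      Real.sin_nonneg_of_nonneg_of_le_pi (by linarith) (by linarith)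
    calc (0:ℝ) ≤ Real.sin (x - k * π) := hsinpos
      _ = (-1:ℝ)^k * Real.sin x := by
          rw [hsin, ← mul_assoc, ← pow_add, ← two_mul, pow_mul]
          simp
end

section
/- Let n ≥ 2 be a natural number and let ν satisfy 1 ≤ ν ≤ ⌊n/2⌋. Then ⌈n/2⌉ · (C(n−2, ν) + C(n−2, ν−2)) ≥ 2 · (⌈n/2⌉ − 1) · C(n−2, ν−1), with equality when ν = ⌊n/2⌋. Equivalently, the minimum over 1 ≤ ν ≤ ⌊n/2⌋ of the ratio (C(n−2,ν) + C(n−2,ν−2)) / (2·C(n−2,ν−1)) equals 1 − 1/⌈n/2⌉, attained at ν = ⌊n/2⌋. -/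
lemma key_ineq (c k a : ℕ) (hka : k ≤ a) (hc : 2*c = k+a+2 ∨ 2*c = k+a+3) :
    2*(c-1)*((k+1)*(a+1)) ≤ c*(a*(a+1)+k*(k+1)) := by
  have hc1 : 1 ≤ c := by omega
  zify [hc1]
  rcases hc with hc | hc
  · have hc' : 2*(c:ℤ) = k+a+2 := by exact_mod_cast hc
    have expand : 2*((c:ℤ)*(a*(a+1)+k*(k+1))) - 2*(2*(c-1)*((k+1)*(a+1))) =
        ((a:ℤ)-k)^2*(a+k+1) + (2*c-(k+a+2))*(a^2+k^2+a+k-2*(k+1)*(a+1)) := by ring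
    nlinarith [mul_nonneg (sq_nonneg ((a:ℤ)-k)) (show (0:ℤ) ≤ (a:ℤ)+k+1 by positivity)]
  · have ha : k + 1 ≤ a := by omega
    have hc' : 2*(c:ℤ) = k+a+3 := by exact_mod_cast hc
    have ha' : (1:ℤ) ≤ (a:ℤ) - k := by
      have : (k:ℤ) + 1 ≤ (a:ℤ) := by exact_mod_cast ha
      linarith
    have expand : 2*((c:ℤ)*(a*(a+1)+k*(k+1))) - 2*(2*(c-1)*((k+1)*(a+1))) =
        ((a:ℤ)+k+2)*(((a:ℤ)-k)^2-1) + (2*c-(k+a+3))*(a^2+k^2+a+k-2*(k+1)*(a+1)) := by ring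
    nlinarith [mul_nonneg (show (0:ℤ) ≤ (a:ℤ)+k+2 by positivity)
      (show (0:ℤ) ≤ ((a:ℤ)-k)^2-1 by nlinarith [ha'])]

lemma key_eq (c k a : ℕ) (hka : k ≤ a) (hak : a ≤ k+1) (hc : 2*c = k+a+2 ∨ 2*c = k+a+3) :
    2*(c-1)*((k+1)*(a+1)) = c*(a*(a+1)+k*(k+1)) := by
  have h : (a = k ∧ c = k+1) ∨ (a = k+1 ∧ c = k+2) := by omega
  rcases h with ⟨ha, hc2⟩ | ⟨ha, hc2⟩
  · rw [ha, hc2, show k + 1 - 1 = k from by omega]; ring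
  · rw [ha, hc2, show k + 2 - 1 = k + 1 from by omega]; ring

theorem binomial_ratio_minimum (n ν : ℕ) (hn : 2 ≤ n) (h1 : 1 ≤ ν) (h2 : ν ≤ n / 2) :
    2 * ((n + 1) / 2 - 1) * Nat.choose (n - 2) (ν - 1) ≤
      (n + 1) / 2 * (Nat.choose (n - 2) ν +
        (if 2 ≤ ν then Nat.choose (n - 2) (ν - 2) else 0)) ∧
    (ν = n / 2 →
      2 * ((n + 1) / 2 - 1) * Nat.choose (n - 2) (ν - 1) =
        (n + 1) / 2 * (Nat.choose (n - 2) ν +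
          (if 2 ≤ ν then Nat.choose (n - 2) (ν - 2) else 0))) := by
  obtain ⟨m, rfl⟩ : ∃ m, n = m + 2 := ⟨n - 2, by omega⟩
  simp only [Nat.add_sub_cancel]
  obtain ⟨c, hcdef⟩ : ∃ c, (m + 2 + 1) / 2 = c := ⟨_, rfl⟩
  rw [hcdef]
  have hcm : 2*c = m + 2 ∨ 2*c = m + 3 := by omega
  rcases eq_or_lt_of_le h1 with h1' | h1'
  · -- ν = 1
    subst h1'
    rw [if_neg (by omega)]
    simp only [show (1:ℕ) - 1 = 0 from rfl, Nat.choose_zero_right, Nat.choose_one_right,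
      mul_one, add_zero]
    constructor
    · -- 2 * (c - 1) ≤ c * m
      rcases Nat.lt_or_ge m 2 with hm | hm
      · interval_cases m <;> omega
      · have h := Nat.mul_le_mul_left c hm
        omega
    · intro hv
      have hm1 : m ≤ 1 := by omega
      interval_cases m <;> omega
  · -- ν ≥ 2
    obtain ⟨j, rfl⟩ : ∃ j, ν = j + 2 := ⟨ν - 2, by omega⟩
    rw [if_pos (by omega)]
    simp only [Nat.add_sub_cancel, show j + 2 - 1 = j + 1 from rfl]
    have hjm : 2*(j+1) ≤ m := by omega
    obtain ⟨a, hadef⟩ : ∃ a, m - (j+1) = a := ⟨_, rfl⟩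
    have ham : m = (j+1) + a := by omega
    have haj : j + 1 ≤ a := by omega
    have hma : m - j = a + 1 := by omega
    have hc : 2*c = (j+1) + a + 2 ∨ 2*c = (j+1) + a + 3 := by omega
    have id1 : Nat.choose m (j+2) * (j+2) = Nat.choose m (j+1) * a := by
      have h := Nat.choose_succ_right_eq m (j+1)
      rwa [hadef] at h
    have id2 : Nat.choose m (j+1) * (j+1) = Nat.choose m j * (a+1) := by
      have h := Nat.choose_succ_right_eq m j
      rwa [hma] at h
    have hkey := key_ineq c (j+1) a haj hc
    have P : 0 < (j+2)*(a+1) := by positivity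
    constructor
    · apply Nat.le_of_mul_le_mul_right _ P
      calc 2 * (c-1) * Nat.choose m (j+1) * ((j+2)*(a+1))
          = Nat.choose m (j+1) * (2*(c-1)*(((j+1)+1)*(a+1))) := by ring
        _ ≤ Nat.choose m (j+1) * (c*(a*(a+1)+(j+1)*((j+1)+1))) :=
            Nat.mul_le_mul_left _ hkey
        _ = c * ((Nat.choose m (j+1) * a) * (a+1) + (Nat.choose m (j+1) * (j+1)) * (j+2)) := by
            ring
        _ = c * ((Nat.choose m (j+2) * (j+2)) * (a+1) + (Nat.choose m j * (a+1)) * (j+2)) := by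
            rw [id1, id2]
        _ = c * (Nat.choose m (j+2) + Nat.choose m j) * ((j+2)*(a+1)) := by ring
    · intro hv
      have hak : a ≤ (j+1) + 1 := by omega
      have hkeq := key_eq c (j+1) a haj hak hc
      apply Nat.eq_of_mul_eq_mul_right P
      calc 2 * (c-1) * Nat.choose m (j+1) * ((j+2)*(a+1))
          = Nat.choose m (j+1) * (2*(c-1)*(((j+1)+1)*(a+1))) := by ring
        _ = Nat.choose m (j+1) * (c*(a*(a+1)+(j+1)*((j+1)+1))) := by rw [hkeq]
        _ = c * ((Nat.choose m (j+1) * a) * (a+1) + (Nat.choose m (j+1) * (j+1)) * (j+2)) := by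
            ring
        _ = c * ((Nat.choose m (j+2) * (j+2)) * (a+1) + (Nat.choose m j * (a+1)) * (j+2)) := by
            rw [id1, id2]
        _ = c * (Nat.choose m (j+2) + Nat.choose m j) * ((j+2)*(a+1)) := by ring
end
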